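/- Expression of degenerate Whitney numbers via partial Bell polynomials (Theorem 2.15, Y = 1): W_{m,λ}(n,k) = (1/m^k) Σ_{l=k}^{n} C(n,l) B_{l,k}( (1)_{1,λ/m} m, (1)_{2,λ/m} m^2, …, (1)_{l-k+1,λ/m} m^{l-k+1} ) (1)_{n-l,λ}, where B_{l,k} denotes the partial Bell polynomial. -/

import Mathlib

/-- The degenerate falling factorial `(x)_{n,λ} = x(x-λ)⋯(x-(n-1)λ)`, with `(x)_{0,λ} = 1`. -/
def degFall (x lam : ℝ) (n : ℕ) : ℝ :=
  ∏ i ∈ Finset.range n, (x - (i : ℝ) * lam)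

/-- The degenerate Whitney numbers of the second kind. -/
noncomputable def degWhitney (m : ℕ) (lam : ℝ) (n k : ℕ) : ℝ :=
  (1 / ((m : ℝ) ^ k * (k.factorial : ℝ))) *
    ∑ j ∈ Finset.range (k + 1),
      (k.choose j : ℝ) * (-1 : ℝ) ^ (k - j) * degFall ((m : ℝ) * (j : ℝ) + 1) lam n

/-- The partial Bell polynomial `B_{n,k}(x₁, x₂, …)`, defined via the generating function
`(1/k!)(Σ_{j≥1} x_j tʲ/j!)ᵏ = Σ_{n≥k} B_{n,k}(x₁,…,x_{n-k+1}) tⁿ/n!`. -/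
noncomputable def bellPartial (x : ℕ → ℝ) (n k : ℕ) : ℝ :=
  (n.factorial : ℝ) *
    PowerSeries.coeff n
      (((k.factorial : ℝ))⁻¹ •
        (PowerSeries.mk fun j => if j = 0 then 0 else x j / (j.factorial : ℝ)) ^ k)

open Finset PowerSeries

private lemma degFall_zero' (x lam : ℝ) : degFall x lam 0 = 1 := by simp [degFall]

private lemma degFall_succ' (x lam : ℝ) (n : ℕ) :
    degFall x lam (n + 1) = degFall x lam n * (x - (n : ℝ) * lam) := by
  simp [degFall, Finset.prod_range_succ]

/-- Vandermonde-type identity for the degenerate falling factorial. -/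
private lemma degFall_add (x y lam : ℝ) (n : ℕ) :
    degFall (x + y) lam n =
      ∑ l ∈ Finset.range (n + 1),
        (n.choose l : ℝ) * degFall x lam l * degFall y lam (n - l) := by
  induction n with
  | zero => simp [degFall]
  | succ n ih =>
    rw [degFall_succ', ih, Finset.sum_mul]
    rw [Finset.sum_range_succ' (fun l => ((n+1).choose l : ℝ) * degFall x lam l
        * degFall y lam (n + 1 - l))]
    have h1 : ∀ l ∈ Finset.range (n + 1),
        ((n+1).choose (l+1) : ℝ) * degFall x lam (l+1) * degFall y lam (n + 1 - (l+1))
          = (n.choose l : ℝ) * degFall x lam (l+1) * degFall y lam (n - l)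
            + (n.choose (l+1) : ℝ) * degFall x lam (l+1) * degFall y lam (n - l) := by
      intro l hl
      rw [Nat.choose_succ_succ, Nat.succ_sub_succ, Nat.cast_add, add_mul, add_mul]
    rw [Finset.sum_congr rfl h1, Finset.sum_add_distrib]
    have h2 : (∑ l ∈ Finset.range (n+1),
          (n.choose (l+1) : ℝ) * degFall x lam (l+1) * degFall y lam (n - l))
          + ((n+1).choose 0 : ℝ) * degFall x lam 0 * degFall y lam (n + 1 - 0)
        = ∑ l ∈ Finset.range (n+1),
            (n.choose l : ℝ) * degFall x lam l * degFall y lam (n + 1 - l) := by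
      rw [Finset.sum_range_succ' (fun l => (n.choose l : ℝ) * degFall x lam l
          * degFall y lam (n + 1 - l)) n]
      congr 1
      · rw [Finset.sum_range_succ]
        simp only [Nat.choose_succ_self, Nat.cast_zero, zero_mul, add_zero]
        refine Finset.sum_congr rfl fun l hl => ?_
        congr 2
        omega
      · norm_num
    rw [add_assoc, h2, ← Finset.sum_add_distrib]
    refine Finset.sum_congr rfl fun l hl => ?_
    rw [Finset.mem_range] at hl
    have hln : l ≤ n := Nat.lt_succ_iff.mp hl
    have e1 : n + 1 - l = (n - l) + 1 := by omega
    rw [e1, degFall_succ' y, degFall_succ' x]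
    have e2 : ((n - l : ℕ) : ℝ) = (n : ℝ) - (l : ℝ) := by
      rw [Nat.cast_sub hln]
    rw [e2]
    ring

/-- The degenerate exponential EGF. -/
private noncomputable def Eser (lam x : ℝ) : PowerSeries ℝ :=
  PowerSeries.mk fun j => degFall x lam j / (j.factorial : ℝ)

private lemma Eser_mul (lam x y : ℝ) : Eser lam x * Eser lam y = Eser lam (x + y) := by
  ext n
  rw [PowerSeries.coeff_mul, Finset.Nat.sum_antidiagonal_eq_sum_range_succ_mk]
  simp only [Eser, PowerSeries.coeff_mk]
  rw [degFall_add, Finset.sum_div]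
  refine Finset.sum_congr rfl fun l hl => ?_
  rw [Finset.mem_range, Nat.lt_succ_iff] at hl
  rw [Nat.cast_choose ℝ hl]
  have h1 : (l.factorial : ℝ) ≠ 0 := Nat.cast_ne_zero.mpr l.factorial_ne_zero
  have h2 : ((n - l).factorial : ℝ) ≠ 0 := Nat.cast_ne_zero.mpr (n - l).factorial_ne_zero
  have h3 : (n.factorial : ℝ) ≠ 0 := Nat.cast_ne_zero.mpr n.factorial_ne_zero
  field_simp

private lemma Eser_zero (lam : ℝ) : Eser lam 0 = 1 := by
  ext n
  cases n with
  | zero => simp [Eser, degFall_zero']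
  | succ n =>
    simp only [Eser, PowerSeries.coeff_mk, PowerSeries.coeff_one, Nat.succ_ne_zero, if_false]
    have : degFall 0 lam (n + 1) = 0 := by
      apply Finset.prod_eq_zero (i := 0) (Finset.mem_range.mpr n.succ_pos)
      simp
    rw [this, zero_div]

private lemma Eser_pow (lam x : ℝ) (j : ℕ) : Eser lam x ^ j = Eser lam ((j : ℝ) * x) := by
  induction j with
  | zero => simp [Eser_zero]
  | succ j ih =>
    rw [pow_succ, ih, Eser_mul]
    push_cast
    ring_nf

private lemma bellPartial_eq_zero (x : ℕ → ℝ) {l k : ℕ} (h : l < k) : bellPartial x l k = 0 := by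
  unfold bellPartial
  rw [PowerSeries.coeff_smul]
  have hx : PowerSeries.X ∣
      (PowerSeries.mk fun j => if j = 0 then 0 else x j / (j.factorial : ℝ)) := by
    rw [PowerSeries.X_dvd_iff]
    simp [← PowerSeries.coeff_zero_eq_constantCoeff]
  have : (PowerSeries.coeff l)
      ((PowerSeries.mk fun j => if j = 0 then 0 else x j / (j.factorial : ℝ)) ^ k) = 0 :=
    PowerSeries.X_pow_dvd_iff.mp (pow_dvd_pow_of_dvd hx k) l h
  rw [this]
  simp

private lemma bell_formula (m : ℕ) (hm : 0 < m) (lam : ℝ) (l k : ℕ) :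
    bellPartial (fun j => degFall 1 (lam / (m : ℝ)) j * (m : ℝ) ^ j) l k =
      (1 / (k.factorial : ℝ)) * ∑ j ∈ Finset.range (k + 1),
        (k.choose j : ℝ) * (-1 : ℝ) ^ (k - j) * degFall ((m : ℝ) * (j : ℝ)) lam l := by
  have hm' : (m : ℝ) ≠ 0 := Nat.cast_ne_zero.mpr hm.ne'
  have hx : ∀ j : ℕ, degFall 1 (lam / (m : ℝ)) j * (m : ℝ) ^ j = degFall (m : ℝ) lam j := by
    intro j
    simp only [degFall]
    rw [show ((m : ℝ)) ^ j = ∏ _i ∈ Finset.range j, (m : ℝ) by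
      rw [Finset.prod_const, Finset.card_range], ← Finset.prod_mul_distrib]
    refine Finset.prod_congr rfl fun i _ => ?_
    field_simp
  have hser : (PowerSeries.mk fun j => if j = 0 then 0 else
        (degFall 1 (lam / (m : ℝ)) j * (m : ℝ) ^ j) / (j.factorial : ℝ))
      = Eser lam (m : ℝ) - 1 := by
    ext j
    rw [PowerSeries.coeff_mk, map_sub]
    cases j with
    | zero => simp [Eser, degFall_zero']
    | succ j =>
      simp [Eser, PowerSeries.coeff_one, hx]
  have key : (Eser lam (m : ℝ) - 1) ^ k =
      ∑ j ∈ Finset.range (k + 1),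
        PowerSeries.C ((k.choose j : ℝ) * (-1 : ℝ) ^ (k - j)) * Eser lam ((j : ℝ) * m) := by
    rw [sub_eq_add_neg, add_pow]
    refine Finset.sum_congr rfl fun j hj => ?_
    rw [Eser_pow]
    have hn1 : (-1 : PowerSeries ℝ) = PowerSeries.C (-1) := by
      rw [map_neg, map_one]
    rw [hn1, ← map_pow]
    have hch : ((k.choose j : ℕ) : PowerSeries ℝ) = PowerSeries.C ((k.choose j : ℝ)) := by
      rw [map_natCast]
    rw [hch, mul_assoc, ← map_mul,
      mul_comm ((-1 : ℝ) ^ (k - j)) ((k.choose j : ℕ) : ℝ)]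
    exact mul_comm _ _
  unfold bellPartial
  rw [hser, PowerSeries.coeff_smul, key, map_sum]
  have hcoeff : ∀ j ∈ Finset.range (k + 1),
      (PowerSeries.coeff l)
        (PowerSeries.C ((k.choose j : ℝ) * (-1 : ℝ) ^ (k - j)) * Eser lam ((j : ℝ) * m))
      = ((k.choose j : ℝ) * (-1 : ℝ) ^ (k - j)) * (degFall ((j : ℝ) * m) lam l
          / (l.factorial : ℝ)) := by
    intro j _
    rw [PowerSeries.coeff_C_mul]
    simp [Eser]
  rw [Finset.sum_congr rfl hcoeff]
  rw [smul_eq_mul, Finset.mul_sum, Finset.mul_sum, Finset.mul_sum]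
  refine Finset.sum_congr rfl fun j _ => ?_
  have hl : (l.factorial : ℝ) ≠ 0 := Nat.cast_ne_zero.mpr l.factorial_ne_zero
  have hk : (k.factorial : ℝ) ≠ 0 := Nat.cast_ne_zero.mpr k.factorial_ne_zero
  rw [mul_comm ((j : ℝ)) ((m : ℝ))]
  field_simp

/-- `W_{m,λ}(n,k) = (1/mᵏ) Σ_{l=k}^n C(n,l) B_{l,k}((1)_{1,λ/m}m, …, (1)_{l-k+1,λ/m}m^{l-k+1}) (1)_{n-l,λ}`. -/
theorem degWhitney_eq_sum_bellPartial (m : ℕ) (hm : 0 < m) (lam : ℝ) (n k : ℕ) (hkn : k ≤ n) :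
    degWhitney m lam n k =
      (1 / (m : ℝ) ^ k) *
        ∑ l ∈ Finset.Icc k n,
          (n.choose l : ℝ) *
            bellPartial (fun j => degFall 1 (lam / (m : ℝ)) j * (m : ℝ) ^ j) l k *
            degFall 1 lam (n - l) := by
  have hsub : Finset.Icc k n ⊆ Finset.range (n + 1) := by
    intro l hl
    rw [Finset.mem_Icc] at hl
    rw [Finset.mem_range]
    omega
  rw [Finset.sum_subset hsub (fun l hl hnot => by
    have hlk : l < k := by
      rw [Finset.mem_range] at hl
      rw [Finset.mem_Icc] at hnot
      omega
    rw [bellPartial_eq_zero _ hlk]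
    ring)]
  have hrw : ∀ l ∈ Finset.range (n + 1),
      (n.choose l : ℝ) *
        bellPartial (fun j => degFall 1 (lam / (m : ℝ)) j * (m : ℝ) ^ j) l k *
        degFall 1 lam (n - l)
      = ∑ j ∈ Finset.range (k + 1), (1 / (k.factorial : ℝ)) * (n.choose l : ℝ) *
          ((k.choose j : ℝ) * (-1 : ℝ) ^ (k - j) * degFall ((m : ℝ) * (j : ℝ)) lam l) *
          degFall 1 lam (n - l) := by
    intro l _
    rw [bell_formula m hm lam l k]
    simp only [Finset.mul_sum, Finset.sum_mul]
    refine Finset.sum_congr rfl fun j _ => ?_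
    ring
  rw [Finset.sum_congr rfl hrw, Finset.sum_comm]
  unfold degWhitney
  rw [Finset.mul_sum, Finset.mul_sum]
  refine Finset.sum_congr rfl fun j _ => ?_
  rw [show (m : ℝ) * (j : ℝ) + 1 = (m : ℝ) * (j : ℝ) + 1 from rfl, degFall_add ((m : ℝ) * j) 1 lam n]
  rw [Finset.mul_sum, Finset.mul_sum, Finset.mul_sum]
  refine Finset.sum_congr rfl fun l _ => ?_
  ring
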